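/- Let T > 0 and α ∈ ℝ. Define A_T(α) = ∫₀^T ∫_ℝ (sin(t·|ξ|))²/ξ² · |ξ|^α dξ dt. Then A_T(α) < ∞ if and only if α ∈ (−1,1), and in that case A_T(α) = 2^{1−α} · C_α · T^{2−α}/(2−α), where C_α = Γ(α)·sin(πα/2)/(1−α) for α ∈ (−1,1)\{0} and C₀ = π/2. -/

import Mathlib

open MeasureTheory Real Set


-- L2 scaling
lemma lint_scale (f : ℝ → ENNReal) (hf : Measurable f) {c : ℝ} (hc : 0 < c) :
    ∫⁻ x in Ioi (0:ℝ), f (c * x) = ENNReal.ofReal c⁻¹ * ∫⁻ x in Ioi (0:ℝ), f x := by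
  have hmap : Measure.map (fun x : ℝ => c * x) volume = ENNReal.ofReal |c⁻¹| • volume :=
    Real.map_volume_mul_left (ne_of_gt hc)
  have h := setLIntegral_map (μ := volume) (s := Ioi (0:ℝ)) measurableSet_Ioi hf
      (measurable_const_mul c)
  rw [hmap] at h
  rw [preimage_const_mul_Ioi₀ _ hc] at h
  simp only [zero_div] at h
  rw [Measure.restrict_smul, lintegral_smul_measure, abs_of_pos (inv_pos.2 hc)] at h
  exact h.symm

-- L1 evenness
lemma lint_abs (f : ℝ → ENNReal) (hf : Measurable f) :
    ∫⁻ x : ℝ, f |x| = 2 * ∫⁻ x in Ioi (0:ℝ), f x := by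
  have h1 : ∫⁻ x : ℝ, f |x| = (∫⁻ x in Iio (0:ℝ), f |x|) + ∫⁻ x in Ici (0:ℝ), f |x| := by
    rw [← lintegral_add_compl (μ := volume) (fun x => f |x|) (measurableSet_Iio (a := (0:ℝ)))]
    congr 1
    · congr 1; simp [compl_Iio]
  have h2 : ∫⁻ x in Ici (0:ℝ), f |x| = ∫⁻ x in Ioi (0:ℝ), f x := by
    rw [← setLIntegral_congr (f := fun x => f |x|) Ioi_ae_eq_Ici]
    refine setLIntegral_congr_fun measurableSet_Ioi ?_
    intro x hx
    dsimp only
    rw [abs_of_pos hx]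
  have h3 : ∫⁻ x in Iio (0:ℝ), f |x| = ∫⁻ x in Ioi (0:ℝ), f x := by
    have hmp : MeasurePreserving (fun x : ℝ => -x) volume volume :=
      Measure.measurePreserving_neg volume
    have h := setLIntegral_map (μ := volume) (s := Iio (0:ℝ)) measurableSet_Iio
        (hf.comp measurable_abs) measurable_neg
    rw [hmp.map_eq] at h
    have hpre : (fun x : ℝ => -x) ⁻¹' Iio 0 = Ioi 0 := by
      ext x; simp
    rw [hpre] at h
    simp only [Function.comp] at h
    rw [h]
    refine setLIntegral_congr_fun measurableSet_Ioi ?_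
    intro x hx
    dsimp only
    rw [abs_neg, abs_of_pos hx]
  rw [h1, h2, h3, two_mul]

noncomputable def Iα (α : ℝ) : ENNReal :=
  ∫⁻ u in Ioi (0:ℝ), ENNReal.ofReal (Real.sin u ^ 2 * u ^ (α - 2))

lemma meas_sinsq_rpow (α : ℝ) :
    Measurable (fun u : ℝ => ENNReal.ofReal (Real.sin u ^ 2 * u ^ (α - 2))) := by
  fun_prop

lemma inner_eq (α : ℝ) {t : ℝ} (ht : 0 < t) :
    ∫⁻ ξ : ℝ, ENNReal.ofReal ((Real.sin (t * |ξ|)) ^ 2 / ξ ^ 2 * |ξ| ^ α)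
      = ENNReal.ofReal (2 * t ^ (1 - α)) * Iα α := by
  have step1 : ∫⁻ ξ : ℝ, ENNReal.ofReal ((Real.sin (t * |ξ|)) ^ 2 / ξ ^ 2 * |ξ| ^ α)
      = ∫⁻ ξ : ℝ, (fun x => ENNReal.ofReal ((Real.sin (t * x)) ^ 2 / x ^ 2 * x ^ α)) |ξ| := by
    refine lintegral_congr fun ξ => ?_
    rw [← sq_abs ξ]
  rw [step1, lint_abs (fun x => ENNReal.ofReal ((Real.sin (t * x)) ^ 2 / x ^ 2 * x ^ α))
    (by fun_prop)]
  have step2 : ∫⁻ x in Ioi (0:ℝ), ENNReal.ofReal ((Real.sin (t * x)) ^ 2 / x ^ 2 * x ^ α)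
      = ∫⁻ x in Ioi (0:ℝ), ENNReal.ofReal (t ^ (2 - α)) *
          (fun u => ENNReal.ofReal (Real.sin u ^ 2 * u ^ (α - 2))) (t * x) := by
    refine setLIntegral_congr_fun measurableSet_Ioi ?_
    intro x hx
    dsimp only
    have hx0 : (0:ℝ) < x := hx
    rw [← ENNReal.ofReal_mul (by positivity)]
    congr 1
    have h2 : (x:ℝ) ^ (2:ℕ) = x ^ ((2:ℝ)) := by
      rw [← Real.rpow_natCast x 2]; norm_num
    rw [h2, Real.mul_rpow ht.le hx0.le, div_eq_mul_inv, ← Real.rpow_neg hx0.le]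
    rw [mul_assoc, ← Real.rpow_add hx0]
    rw [show Real.sin (t*x) ^ 2 * (t ^ (α-2) * x ^ (α-2))
        = t ^ (α-2) * (Real.sin (t*x) ^ 2 * x ^ (α-2)) by ring, ← mul_assoc,
      ← Real.rpow_add ht]
    rw [show (-2:ℝ) + α = α - 2 by ring, show (2 - α) + (α - 2) = 0 by ring,
      Real.rpow_zero, one_mul]
  rw [step2, lintegral_const_mul (ENNReal.ofReal (t ^ (2 - α)))
      (f := fun x => (fun u => ENNReal.ofReal (Real.sin u ^ 2 * u ^ (α - 2))) (t * x))
      (by exact (meas_sinsq_rpow α).comp (measurable_const_mul t)),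
    lint_scale (fun u => ENNReal.ofReal (Real.sin u ^ 2 * u ^ (α - 2)))
      (meas_sinsq_rpow α) ht]
  rw [show Iα α = ∫⁻ u in Ioi (0:ℝ), ENNReal.ofReal (Real.sin u ^ 2 * u ^ (α - 2)) from rfl]
  rw [← mul_assoc, ← mul_assoc]
  congr 1
  rw [← ENNReal.ofReal_ofNat, ← ENNReal.ofReal_mul (by norm_num),
    ← ENNReal.ofReal_mul (by positivity)]
  congr 1
  rw [show t⁻¹ = t ^ (-1:ℝ) by rw [Real.rpow_neg_one], mul_assoc,
    ← Real.rpow_add ht, show (2 - α) + (-1:ℝ) = 1 - α by ring]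

lemma master (T α : ℝ) :
    (∫⁻ t in Set.Ioc (0 : ℝ) T, ∫⁻ ξ : ℝ,
        ENNReal.ofReal ((Real.sin (t * |ξ|)) ^ 2 / ξ ^ 2 * |ξ| ^ α))
      = (∫⁻ t in Set.Ioc (0 : ℝ) T, ENNReal.ofReal (2 * t ^ (1 - α))) * Iα α := by
  rw [← lintegral_mul_const (Iα α)
    (f := fun t => ENNReal.ofReal (2 * t ^ (1 - α))) (by fun_prop)]
  refine setLIntegral_congr_fun measurableSet_Ioc ?_
  intro t ht
  exact inner_eq α ht.1

lemma tau_eq {T α : ℝ} (hT : 0 < T) (hα : α < 2) :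
    ∫⁻ t in Set.Ioc (0:ℝ) T, ENNReal.ofReal (2 * t ^ (1 - α))
      = ENNReal.ofReal (2 * (T ^ (2 - α) / (2 - α))) := by
  have hi : IntervalIntegrable (fun t : ℝ => t ^ (1 - α)) volume 0 T :=
    intervalIntegral.intervalIntegrable_rpow' (by linarith)
  have hi' : IntegrableOn (fun t : ℝ => 2 * t ^ (1 - α)) (Ioc 0 T) := by
    have := (hi.const_mul 2)
    rwa [intervalIntegrable_iff, uIoc_of_le hT.le] at this
  rw [← ofReal_integral_eq_lintegral_ofReal hi' ?_]
  · congr 1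
    have : ∫ t in Ioc (0:ℝ) T, 2 * t ^ (1 - α) = ∫ t in (0:ℝ)..T, 2 * t ^ (1 - α) := by
      rw [intervalIntegral.integral_of_le hT.le]
    rw [this, intervalIntegral.integral_const_mul, integral_rpow (Or.inl (by linarith))]
    rw [show (1:ℝ) - α + 1 = 2 - α by ring, Real.zero_rpow (by intro h; linarith)]
    ring
  · filter_upwards [self_mem_ae_restrict measurableSet_Ioc] with t ht
    have : (0:ℝ) < t := ht.1
    positivity

lemma tau_pos {T α : ℝ} (hT : 0 < T) :
    (∫⁻ t in Set.Ioc (0:ℝ) T, ENNReal.ofReal (2 * t ^ (1 - α))) ≠ 0 := by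
  rw [← pos_iff_ne_zero, lintegral_pos_iff_support (by fun_prop)]
  have hsub : Ioc (0:ℝ) T ⊆ Function.support fun t => ENNReal.ofReal (2 * t ^ (1 - α)) := by
    intro t ht
    have h1 : (0:ℝ) < t := ht.1
    simp only [Function.mem_support, ne_eq, ENNReal.ofReal_eq_zero, not_le]
    positivity
  calc (0:ENNReal) < volume (Ioc (0:ℝ) T) := by
        rw [Real.volume_Ioc]; exact ENNReal.ofReal_pos.2 (by linarith)
    _ = (volume.restrict (Ioc (0:ℝ) T)) (Ioc (0:ℝ) T) := by
        rw [Measure.restrict_apply measurableSet_Ioc, inter_self]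
    _ ≤ _ := measure_mono hsub

lemma lint_rpow_top {α : ℝ} (hα : α ≤ -1) :
    ∫⁻ u in Ioo (0:ℝ) 1, ENNReal.ofReal (u ^ α) = ⊤ := by
  by_contra h
  have hlt : ∫⁻ u in Ioo (0:ℝ) 1, ENNReal.ofReal (u ^ α) < ⊤ := lt_top_iff_ne_top.2 h
  have hnn : 0 ≤ᵐ[volume.restrict (Ioo (0:ℝ) 1)] fun u : ℝ => u ^ α := by
    filter_upwards [self_mem_ae_restrict measurableSet_Ioo] with u hu
    exact Real.rpow_nonneg hu.1.le α
  have hint : IntegrableOn (fun u : ℝ => u ^ α) (Ioo (0:ℝ) 1) := by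
    refine ⟨(by fun_prop : Measurable fun u : ℝ => u ^ α).aestronglyMeasurable, ?_⟩
    rwa [hasFiniteIntegral_iff_ofReal hnn]
  rw [intervalIntegral.integrableOn_Ioo_rpow_iff zero_lt_one] at hint
  linarith

lemma I_top_neg {α : ℝ} (hα : α ≤ -1) : Iα α = ⊤ := by
  refine top_unique ?_
  have h1 : ∫⁻ u in Ioo (0:ℝ) 1, ENNReal.ofReal ((2/π)^2 * u ^ α) ≤ Iα α := by
    refine le_trans ?_ (lintegral_mono_set (Ioo_subset_Ioi_self : Ioo (0:ℝ) 1 ⊆ Ioi 0))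
    refine setLIntegral_mono_ae (by fun_prop) ?_
    filter_upwards with u hu
    refine ENNReal.ofReal_le_ofReal ?_
    have hu0 : (0:ℝ) < u := hu.1
    have hu1 : u ≤ 1 := hu.2.le
    have hs : 2/π * u ≤ Real.sin u := Real.mul_le_sin hu0.le
      (by nlinarith [Real.pi_gt_three])
    have hs2 : (2/π * u)^2 ≤ Real.sin u ^ 2 := by
      have h0 : 0 ≤ 2/π * u := by positivity
      nlinarith
    have hexp : (2/π)^2 * u ^ α = (2/π * u)^2 * u ^ (α - 2) := by
      have : u ^ α = u ^ (2:ℝ) * u ^ (α - 2) := by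
        rw [← Real.rpow_add hu0]; ring_nf
      have h2 : u ^ (2:ℝ) = u ^ (2:ℕ) := by
        rw [← Real.rpow_natCast u 2]; norm_num
      rw [this, h2]; ring
    rw [hexp]
    exact mul_le_mul_of_nonneg_right hs2 (Real.rpow_nonneg hu0.le _)
  refine le_trans ?_ h1
  have : ∀ᵐ u ∂(volume.restrict (Ioo (0:ℝ) 1)),
      ENNReal.ofReal ((2/π)^2 * u ^ α)
        = ENNReal.ofReal ((2/π)^2) * ENNReal.ofReal (u ^ α) := by
    filter_upwards [self_mem_ae_restrict measurableSet_Ioo] with u hu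
    rw [← ENNReal.ofReal_mul (by positivity)]
  rw [lintegral_congr_ae this, lintegral_const_mul (ENNReal.ofReal ((2/π)^2))
    (by fun_prop : Measurable fun u : ℝ => ENNReal.ofReal (u ^ α)),
    lint_rpow_top hα, ENNReal.mul_top (by
      simp only [ne_eq, ENNReal.ofReal_eq_zero, not_le]
      positivity)]

lemma sinsq_period (n : ℕ) :
    ∫⁻ u in Ioc (((n:ℝ)+1)*π) (((n:ℝ)+2)*π), ENNReal.ofReal (Real.sin u ^ 2)
      = ENNReal.ofReal (π/2) := by
  have hle : ((n:ℝ)+1)*π ≤ ((n:ℝ)+2)*π := by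
    have := Real.pi_pos; nlinarith
  have hint : IntegrableOn (fun u : ℝ => Real.sin u ^ 2)
      (Ioc (((n:ℝ)+1)*π) (((n:ℝ)+2)*π)) :=
    (Real.continuous_sin.pow 2).integrableOn_Ioc
  rw [← ofReal_integral_eq_lintegral_ofReal hint
    (Filter.Eventually.of_forall fun u => sq_nonneg _)]
  congr 1
  rw [← intervalIntegral.integral_of_le hle, integral_sin_sq]
  have h1 : Real.sin (((n:ℝ)+1)*π) = 0 := by
    have := Real.sin_nat_mul_pi (n+1); push_cast at this ⊢; linarith
  have h2 : Real.sin (((n:ℝ)+2)*π) = 0 := by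
    have := Real.sin_nat_mul_pi (n+2); push_cast at this ⊢; linarith
  rw [h1, h2]; ring

lemma tail_top : ∫⁻ u in Ioi (1:ℝ), ENNReal.ofReal (Real.sin u ^ 2 * u ^ (-1:ℝ)) = ⊤ := by
  set f : ℝ → ENNReal := fun u => ENNReal.ofReal (Real.sin u ^ 2 * u ^ (-1:ℝ)) with hf
  have hfm : Measurable f := by fun_prop
  set S : ℕ → Set ℝ := fun n => Ioc (((n:ℝ)+1)*π) (((n:ℝ)+2)*π) with hS
  have hSm : ∀ n, MeasurableSet (S n) := fun n => measurableSet_Ioc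
  have hdisj : Pairwise (Function.onFun Disjoint S) := by
    intro m n hmn
    have hpi := Real.pi_pos
    rcases hmn.lt_or_gt with h | h
    · refine Set.Ioc_disjoint_Ioc.2 ?_
      have : ((m:ℝ)+2) ≤ ((n:ℝ)+1) := by exact_mod_cast by omega
      calc min (((m:ℝ)+2)*π) (((n:ℝ)+2)*π) ≤ ((m:ℝ)+2)*π := min_le_left _ _
        _ ≤ ((n:ℝ)+1)*π := by nlinarith
        _ ≤ max (((m:ℝ)+1)*π) (((n:ℝ)+1)*π) := le_max_right _ _
    · refine Set.Ioc_disjoint_Ioc.2 ?_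
      have : ((n:ℝ)+2) ≤ ((m:ℝ)+1) := by exact_mod_cast by omega
      calc min (((m:ℝ)+2)*π) (((n:ℝ)+2)*π) ≤ ((n:ℝ)+2)*π := min_le_right _ _
        _ ≤ ((m:ℝ)+1)*π := by nlinarith
        _ ≤ max (((m:ℝ)+1)*π) (((n:ℝ)+1)*π) := le_max_left _ _
  have hsub : (⋃ n, S n) ⊆ Ioi (1:ℝ) := by
    intro x hx
    rcases mem_iUnion.1 hx with ⟨n, hn⟩
    have hpi := Real.pi_gt_three
    have : ((n:ℝ)+1)*π ≥ 3 := by nlinarith [Nat.cast_nonneg (α := ℝ) n]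
    have := hn.1; simp only [mem_Ioi]; linarith
  refine top_unique ?_
  calc (⊤:ENNReal) = ∑' n : ℕ, ENNReal.ofReal ((((n:ℝ)+2)*π)⁻¹ * (π/2)) := by
        symm
        by_contra h
        have hsum := ENNReal.summable_toReal h
        have heq : ∀ n : ℕ, (ENNReal.ofReal ((((n:ℝ)+2)*π)⁻¹ * (π/2))).toReal
            = (((n:ℝ)+2)*π)⁻¹ * (π/2) := by
          intro n
          refine ENNReal.toReal_ofReal ?_
          have := Real.pi_pos
          positivity
        rw [funext heq] at hsum
        have hpi := Real.pi_pos
        have h2 : Summable (fun n : ℕ => ((n:ℝ)+2)⁻¹) := by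
          have h4 := hsum.mul_right (2/π * π)
          refine h4.congr fun n => ?_
          field_simp
        have h3 : ¬ Summable (fun n : ℕ => ((n:ℝ)+2)⁻¹) := by
          intro hcon
          have := (_root_.summable_nat_add_iff (f := fun n : ℕ => ((n:ℝ))⁻¹) 2).1
            (hcon.congr fun n => by push_cast; ring_nf)
          exact Real.not_summable_natCast_inv this
        exact h3 h2
    _ ≤ ∑' n : ℕ, ∫⁻ u in S n, f u := by
        refine ENNReal.tsum_le_tsum fun n => ?_
        have hpi := Real.pi_pos
        calc ENNReal.ofReal ((((n:ℝ)+2)*π)⁻¹ * (π/2))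
            = ENNReal.ofReal ((((n:ℝ)+2)*π)⁻¹) * ENNReal.ofReal (π/2) := by
              rw [← ENNReal.ofReal_mul (by positivity)]
          _ = ENNReal.ofReal ((((n:ℝ)+2)*π)⁻¹) * ∫⁻ u in S n, ENNReal.ofReal (Real.sin u ^ 2) := by
              rw [sinsq_period n]
          _ = ∫⁻ u in S n, ENNReal.ofReal ((((n:ℝ)+2)*π)⁻¹) * ENNReal.ofReal (Real.sin u ^ 2) := by
              rw [lintegral_const_mul _ (by fun_prop)]
          _ ≤ ∫⁻ u in S n, f u := by
              refine setLIntegral_mono_ae hfm.aemeasurable ?_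
              filter_upwards with u hu
              rw [← ENNReal.ofReal_mul (by positivity)]
              refine ENNReal.ofReal_le_ofReal ?_
              have hu0 : (0:ℝ) < u := by
                have : ((n:ℝ)+1)*π > 0 := by positivity
                linarith [hu.1]
              have hinv : (((n:ℝ)+2)*π)⁻¹ ≤ u ^ (-1:ℝ) := by
                rw [Real.rpow_neg_one]
                exact inv_anti₀ hu0 hu.2
              calc (((n:ℝ)+2)*π)⁻¹ * Real.sin u ^ 2 ≤ u ^ (-1:ℝ) * Real.sin u ^ 2 :=
                    mul_le_mul_of_nonneg_right hinv (sq_nonneg _)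
                _ = Real.sin u ^ 2 * u ^ (-1:ℝ) := by ring
    _ = ∫⁻ u in ⋃ n, S n, f u := (lintegral_iUnion hSm hdisj f).symm
    _ ≤ ∫⁻ u in Ioi (1:ℝ), f u := lintegral_mono_set hsub

lemma I_top_pos {α : ℝ} (hα : 1 ≤ α) : Iα α = ⊤ := by
  refine top_unique ?_
  rw [← tail_top]
  have h1 : ∫⁻ u in Ioi (1:ℝ), ENNReal.ofReal (Real.sin u ^ 2 * u ^ (-1:ℝ))
      ≤ ∫⁻ u in Ioi (1:ℝ), ENNReal.ofReal (Real.sin u ^ 2 * u ^ (α - 2)) := by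
    refine setLIntegral_mono_ae (by fun_prop) ?_
    filter_upwards with u hu
    refine ENNReal.ofReal_le_ofReal ?_
    have hu1 : (1:ℝ) ≤ u := le_of_lt hu
    exact mul_le_mul_of_nonneg_left
      (Real.rpow_le_rpow_of_exponent_le hu1 (by linarith)) (sq_nonneg _)
  exact h1.trans (lintegral_mono_set (Ioi_subset_Ioi (by norm_num)))

lemma laplace_sinsq {x : ℝ} (hx : 0 < x) :
    ∫ u in Ioi (0:ℝ), Real.sin u ^ 2 * Real.exp (-(x*u)) = 2 / (x * (x^2+4)) := by
  have hx4 : x^2 + 4 ≠ 0 := by positivity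
  set G : ℝ → ℝ := fun u => -(Real.exp (-(x*u)))/(2*x)
      - Real.exp (-(x*u))*(-x*Real.cos (2*u) + 2*Real.sin (2*u))/(2*(x^2+4)) with hG
  have hderiv : ∀ u : ℝ, HasDerivAt G (Real.sin u ^ 2 * Real.exp (-(x*u))) u := by
    intro u
    have he : HasDerivAt (fun u : ℝ => Real.exp (-(x*u))) (-x * Real.exp (-(x*u))) u := by
      have h1 : HasDerivAt (fun u : ℝ => -(x*u)) (-x) u := by
        have := ((hasDerivAt_id u).const_mul x).neg; simp only [id] at this; exact this.congr_deriv (by ring)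
      simpa [mul_comm] using h1.exp
    have hcos : HasDerivAt (fun u : ℝ => Real.cos (2*u)) (-Real.sin (2*u) * 2) u := by
      have h1 : HasDerivAt (fun u : ℝ => 2*u) (2:ℝ) u := by
        simpa using (hasDerivAt_id u).const_mul (2:ℝ)
      simpa using h1.cos
    have hsin : HasDerivAt (fun u : ℝ => Real.sin (2*u)) (Real.cos (2*u) * 2) u := by
      have h1 : HasDerivAt (fun u : ℝ => 2*u) (2:ℝ) u := by
        simpa using (hasDerivAt_id u).const_mul (2:ℝ)
      simpa using h1.sin
    have hmix : HasDerivAt (fun u : ℝ => -x*Real.cos (2*u) + 2*Real.sin (2*u))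
        (-x*(-Real.sin (2*u) * 2) + 2*(Real.cos (2*u) * 2)) u :=
      (hcos.const_mul (-x)).add (hsin.const_mul 2)
    have hprod := he.mul hmix
    have hfull := ((he.div_const (2*x)).neg).sub (hprod.div_const (2*(x^2+4)))
    have hsq : Real.sin u ^ 2 = 1/2 - Real.cos (2*u) / 2 := by
      have h1 : Real.cos u ^ 2 = 1/2 + Real.cos (2*u)/2 := by
        rw [Real.cos_sq]
      have h2 : Real.sin u ^ 2 = 1 - Real.cos u ^ 2 := Real.sin_sq u
      rw [h2, h1]; ring
    refine (hfull.congr_deriv ?_).congr_of_eventuallyEq (Filter.Eventually.of_forall fun v => ?_)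
    · rw [hsq]
      field_simp
      ring
    · rw [hG]
      simp only [Pi.sub_apply, Pi.neg_apply, Pi.mul_apply]
      ring
  have hint : IntegrableOn (fun u : ℝ => Real.sin u ^ 2 * Real.exp (-(x*u))) (Ioi (0:ℝ)) := by
    have hbase : IntegrableOn (fun u : ℝ => Real.exp (-(x*u))) (Ioi (0:ℝ)) := by
      refine (exp_neg_integrableOn_Ioi 0 hx).congr_fun (fun u _ => by simp only [neg_mul]) measurableSet_Ioi
    refine Integrable.mono' hbase
      (by fun_prop : Measurable fun u : ℝ => Real.sin u ^ 2 * Real.exp (-(x*u))).aestronglyMeasurable ?_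
    filter_upwards with u
    rw [Real.norm_eq_abs, abs_mul, abs_of_nonneg (sq_nonneg _), abs_of_nonneg (Real.exp_nonneg _)]
    nlinarith [Real.sin_sq_le_one u, Real.exp_nonneg (-(x*u)), sq_nonneg (Real.sin u)]
  have hlim : Filter.Tendsto G Filter.atTop (nhds 0) := by
    have hexp : Filter.Tendsto (fun u : ℝ => Real.exp (-(x*u))) Filter.atTop (nhds 0) :=
      Real.tendsto_exp_atBot.comp (Filter.tendsto_neg_atTop_atBot.comp
        (Filter.Tendsto.const_mul_atTop hx Filter.tendsto_id))
    have h2 : Filter.Tendsto (fun u : ℝ =>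
        Real.exp (-(x*u))*(-x*Real.cos (2*u) + 2*Real.sin (2*u))) Filter.atTop (nhds 0) := by
      refine squeeze_zero_norm (fun u => ?_) (by simpa using hexp.mul_const (|x| + 2))
      rw [norm_mul, Real.norm_eq_abs, Real.norm_eq_abs, abs_of_nonneg (Real.exp_nonneg _)]
      refine mul_le_mul_of_nonneg_left ?_ (Real.exp_nonneg _)
      calc |(-x*Real.cos (2*u) + 2*Real.sin (2*u))|
          ≤ |(-x*Real.cos (2*u))| + |2*Real.sin (2*u)| := abs_add_le _ _
        _ = |x| * |Real.cos (2*u)| + 2 * |Real.sin (2*u)| := by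
            rw [abs_mul, abs_mul, abs_neg]; norm_num
        _ ≤ |x| * 1 + 2 * 1 := by
            gcongr
            · exact Real.abs_cos_le_one _
            · exact Real.abs_sin_le_one _
        _ = |x| + 2 := by ring
    have h4 : ((-(0:ℝ))/(2*x) - 0/(2*(x^2+4))) = 0 := by norm_num
    rw [hG, ← h4]
    exact (hexp.neg.div_const (2*x)).sub (h2.div_const (2*(x^2+4)))
  have := integral_Ioi_of_hasDerivAt_of_tendsto
    (hderiv 0).continuousAt.continuousWithinAt (fun u _ => hderiv u) hint hlim
  rw [this, hG]
  simp only [mul_zero, neg_zero, Real.exp_zero, Real.cos_zero, Real.sin_zero]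
  field_simp
  ring

lemma integral_exp_neg_mul {c : ℝ} (hc : 0 < c) :
    ∫ s in Ioi (0:ℝ), Real.exp (-(c*s)) = c⁻¹ := by
  have := integral_comp_mul_left_Ioi (fun s => Real.exp (-s)) 0 hc
  simp only [mul_zero] at this
  rw [this, integral_exp_neg_Ioi_zero, smul_eq_mul, mul_one]

lemma gamma_scaled {β u : ℝ} (hβ : 0 < β) (hu : 0 < u) :
    ∫ x in Ioi (0:ℝ), x ^ (β - 1) * Real.exp (-(u*x)) = u ^ (-β) * Real.Gamma β := by
  have key := integral_comp_mul_left_Ioi (fun x => Real.exp (-x) * x ^ (β - 1)) 0 hu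
  simp only [mul_zero] at key
  rw [← Real.Gamma_eq_integral hβ] at key
  have congr1 : ∫ x in Ioi (0:ℝ), Real.exp (-(u*x)) * (u*x) ^ (β - 1)
      = ∫ x in Ioi (0:ℝ), u ^ (β-1) * (x ^ (β - 1) * Real.exp (-(u*x))) := by
    refine setIntegral_congr_fun measurableSet_Ioi fun x hx => ?_
    rw [Real.mul_rpow hu.le (le_of_lt hx)]
    ring
  rw [congr1, MeasureTheory.integral_const_mul] at key
  have hune : u ^ (β - 1) ≠ 0 := by positivity
  have heq : ∫ x in Ioi (0:ℝ), x ^ (β - 1) * Real.exp (-(u*x))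
      = u ^ (-(1:ℝ)) * Real.Gamma β * u ^ (-(β-1)) := by
    rw [Real.rpow_neg_one, Real.rpow_neg hu.le]
    rw [smul_eq_mul] at key
    field_simp at key ⊢
    linarith [key]
  rw [heq, mul_comm (u ^ (-(1:ℝ))) (Real.Gamma β), mul_assoc, ← Real.rpow_add hu,
    show -(1:ℝ) + -(β-1) = -β by ring, mul_comm]

lemma gamma_scaled_integrable {β u : ℝ} (hβ : 0 < β) (hu : 0 < u) :
    IntegrableOn (fun x : ℝ => x ^ (β - 1) * Real.exp (-(u*x))) (Ioi (0:ℝ)) := by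
  have := integrableOn_rpow_mul_exp_neg_mul_rpow (s := β - 1) (p := 1) (b := u)
    (by linarith) zero_lt_one hu
  refine this.congr_fun (fun x hx => ?_) measurableSet_Ioi
  dsimp only; rw [Real.rpow_one, neg_mul]

lemma gaussian_rpow {p : ℝ} (hp : -1 < p) :
    ∫ z in Ioi (0:ℝ), z ^ p * Real.exp (-(z^2)) = Real.Gamma ((p+1)/2) / 2 := by
  have h2 : (0:ℝ) < 2 := by norm_num
  have key := integral_comp_rpow_Ioi_of_pos (g := fun y => Real.exp (-y) * y ^ ((p+1)/2 - 1)) h2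
  rw [← Real.Gamma_eq_integral (by linarith : 0 < (p+1)/2)] at key
  have congr1 : ∫ x in Ioi (0:ℝ), (2 * x ^ ((2:ℝ) - 1)) • (Real.exp (-(x ^ (2:ℝ))) * (x ^ (2:ℝ)) ^ ((p+1)/2 - 1))
      = ∫ x in Ioi (0:ℝ), 2 * (x ^ p * Real.exp (-(x^2))) := by
    refine setIntegral_congr_fun measurableSet_Ioi fun x hx => ?_
    have hx0 : (0:ℝ) < x := hx
    have e1 : x ^ ((2:ℝ)) = x ^ (2:ℕ) := by
      rw [← Real.rpow_natCast x 2]; norm_num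
    have e2 : ((x:ℝ) ^ (2:ℕ)) ^ ((p+1)/2 - 1) = x ^ (p-1) := by
      rw [← Real.rpow_natCast x 2, ← Real.rpow_mul hx0.le]
      congr 1; push_cast; ring
    have e3 : x ^ ((2:ℝ) - 1) = x := by
      rw [show (2:ℝ) - 1 = 1 by norm_num, Real.rpow_one]
    have e4 : x * x ^ (p - 1) = x ^ p := by
      have h := Real.rpow_add hx0 1 (p-1)
      rw [Real.rpow_one] at h
      rw [← h]; congr 1; ring
    rw [smul_eq_mul, e3, e1, e2, ← e4]
    ring
  rw [congr1, MeasureTheory.integral_const_mul] at key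
  linarith [key]

lemma gaussian_rpow_scaled {p b : ℝ} (hp : -1 < p) (hb : 0 < b) :
    ∫ z in Ioi (0:ℝ), z ^ p * Real.exp (-(b*z^2))
      = b ^ (-((p+1)/2)) * (Real.Gamma ((p+1)/2) / 2) := by
  have hsb : (0:ℝ) < b ^ ((1:ℝ)/2) := Real.rpow_pos_of_pos hb _
  have key := integral_comp_mul_left_Ioi (fun z => z ^ p * Real.exp (-(z^2))) 0 hsb
  simp only [mul_zero] at key
  rw [gaussian_rpow hp] at key
  have congr1 : ∫ z in Ioi (0:ℝ), (b ^ ((1:ℝ)/2) * z) ^ p * Real.exp (-((b ^ ((1:ℝ)/2) * z)^2))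
      = ∫ z in Ioi (0:ℝ), b ^ (p/2) * (z ^ p * Real.exp (-(b*z^2))) := by
    refine setIntegral_congr_fun measurableSet_Ioi fun z hz => ?_
    have hz0 : (0:ℝ) < z := hz
    have e5 : (b ^ ((1:ℝ)/2) * z) ^ (2:ℕ) = b * z ^ (2:ℕ) := by
      rw [mul_pow]
      congr 1
      rw [← Real.rpow_natCast (b ^ ((1:ℝ)/2)) 2, ← Real.rpow_mul hb.le]
      norm_num
    have e6 : (b ^ ((1:ℝ)/2)) ^ p = b ^ (p/2) := by
      rw [← Real.rpow_mul hb.le]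
      congr 1; ring
    rw [Real.mul_rpow hsb.le hz0.le, e5, e6]
    ring
  rw [congr1, MeasureTheory.integral_const_mul, smul_eq_mul] at key
  have hbp : b ^ (p/2) ≠ 0 := by positivity
  have heq : ∫ z in Ioi (0:ℝ), z ^ p * Real.exp (-(b*z^2))
      = (b ^ ((1:ℝ)/2))⁻¹ * (Real.Gamma ((p+1)/2) / 2) / b ^ (p/2) := by
    field_simp at key ⊢
    linarith [key]
  rw [heq, show (b ^ ((1:ℝ)/2))⁻¹ = b ^ (-((1:ℝ)/2)) from (Real.rpow_neg hb.le _).symm,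
    div_eq_mul_inv, show (b ^ (p/2))⁻¹ = b ^ (-(p/2)) from (Real.rpow_neg hb.le _).symm,
    mul_comm (b ^ (-((1:ℝ)/2))) _, mul_assoc, ← Real.rpow_add hb,
    show -((1:ℝ)/2) + -(p/2) = -((p+1)/2) by ring, mul_comm]

lemma J1 {α : ℝ} (hα : -1 < α) (hα' : α < 1) :
    ∫⁻ y in Ioi (0:ℝ), ENNReal.ofReal (y ^ (-α) / (y^2+1))
      = ENNReal.ofReal (Real.Gamma ((1-α)/2) * Real.Gamma ((1+α)/2) / 2) := by
  have hp : (-1:ℝ) < -α := by linarith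
  -- step (a): pointwise representation
  have hpt : ∀ y : ℝ, y ∈ Ioi (0:ℝ) →
      ENNReal.ofReal (y ^ (-α) / (y^2+1))
        = ∫⁻ s in Ioi (0:ℝ), ENNReal.ofReal (y ^ (-α) * Real.exp (-((y^2+1)*s))) := by
    intro y hy
    have hy0 : (0:ℝ) < y := hy
    have hc : (0:ℝ) < y^2+1 := by positivity
    have hbase : IntegrableOn (fun s : ℝ => Real.exp (-((y^2+1)*s))) (Ioi (0:ℝ)) :=
      (exp_neg_integrableOn_Ioi 0 hc).congr_fun (fun s _ => by simp only [neg_mul]) measurableSet_Ioi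
    have hInt : IntegrableOn (fun s : ℝ => y ^ (-α) * Real.exp (-((y^2+1)*s))) (Ioi (0:ℝ)) :=
      hbase.const_mul _
    have hval : ∫ s in Ioi (0:ℝ), y ^ (-α) * Real.exp (-((y^2+1)*s))
        = y ^ (-α) / (y^2+1) := by
      rw [MeasureTheory.integral_const_mul, integral_exp_neg_mul hc, div_eq_mul_inv]
    rw [← hval, ofReal_integral_eq_lintegral_ofReal hInt ?_]
    filter_upwards with s
    positivity
  rw [setLIntegral_congr_fun measurableSet_Ioi hpt]
  -- step (b): Tonelli
  have hswap : ∫⁻ y in Ioi (0:ℝ), ∫⁻ s in Ioi (0:ℝ),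
        ENNReal.ofReal (y ^ (-α) * Real.exp (-((y^2+1)*s)))
      = ∫⁻ s in Ioi (0:ℝ), ∫⁻ y in Ioi (0:ℝ),
        ENNReal.ofReal (y ^ (-α) * Real.exp (-((y^2+1)*s))) := by
    exact lintegral_lintegral_swap (by fun_prop)
  rw [hswap]
  -- step (c): inner Gaussian integral
  have hinner : ∀ s : ℝ, s ∈ Ioi (0:ℝ) →
      ∫⁻ y in Ioi (0:ℝ), ENNReal.ofReal (y ^ (-α) * Real.exp (-((y^2+1)*s)))
        = ENNReal.ofReal (Real.Gamma ((1-α)/2) / 2 * (Real.exp (-s) * s ^ ((α-1)/2))) := by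
    intro s hs
    have hs0 : (0:ℝ) < s := hs
    have hsplit : ∀ y : ℝ, y ∈ Ioi (0:ℝ) →
        ENNReal.ofReal (y ^ (-α) * Real.exp (-((y^2+1)*s)))
          = ENNReal.ofReal (Real.exp (-s)) * ENNReal.ofReal (y ^ (-α) * Real.exp (-(s*y^2))) := by
      intro y hy
      have hy0 : (0:ℝ) < y := hy
      rw [← ENNReal.ofReal_mul (Real.exp_nonneg _)]
      congr 1
      rw [show -((y^2+1)*s) = -(s*y^2) + -s by ring, Real.exp_add]
      ring
    rw [setLIntegral_congr_fun measurableSet_Ioi hsplit,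
      lintegral_const_mul _ (by fun_prop)]
    have hint2 : IntegrableOn (fun y : ℝ => y ^ (-α) * Real.exp (-(s*y^2))) (Ioi (0:ℝ)) :=
      (integrableOn_rpow_mul_exp_neg_mul_sq hs0 hp).congr_fun
        (fun y _ => by simp only [neg_mul]) measurableSet_Ioi
    rw [← ofReal_integral_eq_lintegral_ofReal hint2 ?_]
    · rw [gaussian_rpow_scaled hp hs0, ← ENNReal.ofReal_mul (Real.exp_nonneg _)]
      congr 1
      rw [show (-α+1)/2 = (1-α)/2 by ring, show -((1-α)/2) = (α-1)/2 by ring]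
      ring
    · filter_upwards [self_mem_ae_restrict measurableSet_Ioi] with y hy
      have : (0:ℝ) < y := hy
      positivity
  rw [setLIntegral_congr_fun measurableSet_Ioi hinner]
  -- step (d): outer Gamma integral
  have hgpos : (0:ℝ) < Real.Gamma ((1-α)/2) := Real.Gamma_pos_of_pos (by linarith)
  have hfac : ∀ s : ℝ, ENNReal.ofReal (Real.Gamma ((1-α)/2) / 2 * (Real.exp (-s) * s ^ ((α-1)/2)))
      = ENNReal.ofReal (Real.Gamma ((1-α)/2) / 2) * ENNReal.ofReal (Real.exp (-s) * s ^ ((α-1)/2)) := by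
    intro s
    rw [← ENNReal.ofReal_mul (by positivity)]
  simp only [hfac]
  rw [lintegral_const_mul _ (by fun_prop)]
  have hconv : IntegrableOn (fun x : ℝ => Real.exp (-x) * x ^ ((α-1)/2)) (Ioi (0:ℝ)) := by
    have := Real.GammaIntegral_convergent (show (0:ℝ) < (1+α)/2 by linarith)
    refine this.congr_fun (fun x _ => ?_) measurableSet_Ioi
    rw [show (1+α)/2 - 1 = (α-1)/2 by ring]
  rw [← ofReal_integral_eq_lintegral_ofReal hconv ?_]
  · have hgam : ∫ x in Ioi (0:ℝ), Real.exp (-x) * x ^ ((α-1)/2) = Real.Gamma ((1+α)/2) := by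
      rw [Real.Gamma_eq_integral (show (0:ℝ) < (1+α)/2 by linarith)]
      refine setIntegral_congr_fun measurableSet_Ioi fun x _ => ?_
      rw [show (1+α)/2 - 1 = (α-1)/2 by ring]
    rw [hgam, ← ENNReal.ofReal_mul (by positivity)]
    congr 1
    ring
  · filter_upwards [self_mem_ae_restrict measurableSet_Ioi] with x hx
    have : (0:ℝ) < x := hx
    positivity

lemma laplace_sinsq_lint {x : ℝ} (hx : 0 < x) :
    ∫⁻ u in Ioi (0:ℝ), ENNReal.ofReal (Real.sin u ^ 2 * Real.exp (-(u*x)))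
      = ENNReal.ofReal (2 / (x * (x^2+4))) := by
  have hint : IntegrableOn (fun u : ℝ => Real.sin u ^ 2 * Real.exp (-(x*u))) (Ioi (0:ℝ)) := by
    have hbase : IntegrableOn (fun u : ℝ => Real.exp (-(x*u))) (Ioi (0:ℝ)) :=
      (exp_neg_integrableOn_Ioi 0 hx).congr_fun (fun u _ => by simp only [neg_mul]) measurableSet_Ioi
    refine Integrable.mono' hbase
      (by fun_prop : Measurable fun u : ℝ => Real.sin u ^ 2 * Real.exp (-(x*u))).aestronglyMeasurable ?_
    filter_upwards with u
    rw [Real.norm_eq_abs, abs_mul, abs_of_nonneg (sq_nonneg _), abs_of_nonneg (Real.exp_nonneg _)]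
    nlinarith [Real.sin_sq_le_one u, Real.exp_nonneg (-(x*u)), sq_nonneg (Real.sin u)]
  have h1 : ∫⁻ u in Ioi (0:ℝ), ENNReal.ofReal (Real.sin u ^ 2 * Real.exp (-(u*x)))
      = ∫⁻ u in Ioi (0:ℝ), ENNReal.ofReal (Real.sin u ^ 2 * Real.exp (-(x*u))) := by
    refine setLIntegral_congr_fun measurableSet_Ioi ?_
    intro u _
    dsimp only
    rw [mul_comm u x]
  rw [h1, ← ofReal_integral_eq_lintegral_ofReal hint
    (Filter.Eventually.of_forall fun u => by positivity), laplace_sinsq hx]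

lemma I_value {α : ℝ} (hα : -1 < α) (hα' : α < 1) :
    Iα α = ENNReal.ofReal
      (2 ^ (-α) * (Real.Gamma ((1-α)/2) * Real.Gamma ((1+α)/2)) / (2 * Real.Gamma (2-α))) := by
  have hβ : (0:ℝ) < 2 - α := by linarith
  have hΓ : (0:ℝ) < Real.Gamma (2-α) := Real.Gamma_pos_of_pos hβ
  -- step 1: pointwise Gamma representation
  have hpt : ∀ u : ℝ, u ∈ Ioi (0:ℝ) →
      ENNReal.ofReal (Real.sin u ^ 2 * u ^ (α-2))
        = ∫⁻ x in Ioi (0:ℝ), ENNReal.ofReal ((Real.Gamma (2-α))⁻¹ * Real.sin u ^ 2 *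
            (x ^ (1-α) * Real.exp (-(u*x)))) := by
    intro u hu
    have hu0 : (0:ℝ) < u := hu
    have hint : IntegrableOn (fun x : ℝ => x ^ ((2-α) - 1) * Real.exp (-(u*x))) (Ioi (0:ℝ)) :=
      gamma_scaled_integrable hβ hu0
    have hint' : IntegrableOn (fun x : ℝ => (Real.Gamma (2-α))⁻¹ * Real.sin u ^ 2 *
        (x ^ (1-α) * Real.exp (-(u*x)))) (Ioi (0:ℝ)) := by
      have h0 : IntegrableOn (fun x : ℝ => (Real.Gamma (2-α))⁻¹ * Real.sin u ^ 2 *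
          (x ^ ((2-α)-1) * Real.exp (-(u*x)))) (Ioi (0:ℝ)) :=
        hint.const_mul ((Real.Gamma (2-α))⁻¹ * Real.sin u ^ 2)
      refine h0.congr_fun (fun x _ => ?_) measurableSet_Ioi
      rw [show (2-α) - 1 = 1-α by ring]
    rw [← ofReal_integral_eq_lintegral_ofReal hint' ?_]
    · congr 1
      rw [MeasureTheory.integral_const_mul]
      have : ∫ x in Ioi (0:ℝ), x ^ (1-α) * Real.exp (-(u*x)) = u ^ (α-2) * Real.Gamma (2-α) := by
        rw [show (1-α : ℝ) = (2-α) - 1 by ring, gamma_scaled hβ hu0,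
          show -(2-α) = α - 2 by ring]
      rw [this]
      field_simp
    · filter_upwards [self_mem_ae_restrict measurableSet_Ioi] with x hx
      have hx0 : (0:ℝ) < x := hx
      have : (0:ℝ) ≤ (Real.Gamma (2-α))⁻¹ * Real.sin u ^ 2 := by positivity
      positivity
  rw [show Iα α = ∫⁻ u in Ioi (0:ℝ), ENNReal.ofReal (Real.sin u ^ 2 * u ^ (α-2)) from rfl,
    setLIntegral_congr_fun measurableSet_Ioi hpt]
  -- step 2: Tonelli swap
  rw [lintegral_lintegral_swap (by fun_prop)]
  -- step 3: inner Laplace integral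
  have hinner : ∀ x : ℝ, x ∈ Ioi (0:ℝ) →
      ∫⁻ u in Ioi (0:ℝ), ENNReal.ofReal ((Real.Gamma (2-α))⁻¹ * Real.sin u ^ 2 *
          (x ^ (1-α) * Real.exp (-(u*x))))
        = ENNReal.ofReal (2 * (Real.Gamma (2-α))⁻¹) * ENNReal.ofReal (x ^ (-α) / (x^2+4)) := by
    intro x hx
    have hx0 : (0:ℝ) < x := hx
    have hsplit : ∀ u : ℝ, ENNReal.ofReal ((Real.Gamma (2-α))⁻¹ * Real.sin u ^ 2 *
          (x ^ (1-α) * Real.exp (-(u*x))))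
        = ENNReal.ofReal ((Real.Gamma (2-α))⁻¹ * x ^ (1-α)) *
            ENNReal.ofReal (Real.sin u ^ 2 * Real.exp (-(u*x))) := by
      intro u
      rw [← ENNReal.ofReal_mul (by positivity)]
      congr 1
      ring
    simp only [hsplit]
    rw [lintegral_const_mul _ (by fun_prop), laplace_sinsq_lint hx0,
      ← ENNReal.ofReal_mul (by positivity), ← ENNReal.ofReal_mul (by positivity)]
    congr 1
    have hxsplit : x ^ (1-α) = x ^ (-α) * x := by
      have h := Real.rpow_add hx0 (-α) 1
      rw [Real.rpow_one] at h
      rw [← h]; congr 1; ring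
    rw [hxsplit]
    field_simp
  rw [setLIntegral_congr_fun measurableSet_Ioi hinner,
    lintegral_const_mul _ (by fun_prop)]
  -- step 4: rescale to J1
  have hscale := lint_scale (fun x => ENNReal.ofReal (x ^ (-α) / (x^2+4))) (by fun_prop)
    (show (0:ℝ) < 2 by norm_num)
  have hleft : ∫⁻ y in Ioi (0:ℝ), ENNReal.ofReal (((2:ℝ)*y) ^ (-α) / (((2:ℝ)*y)^2+4))
      = ENNReal.ofReal (2 ^ (-α) / 4) *
          ∫⁻ y in Ioi (0:ℝ), ENNReal.ofReal (y ^ (-α) / (y^2+1)) := by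
    rw [← lintegral_const_mul _ (by fun_prop)]
    refine setLIntegral_congr_fun measurableSet_Ioi ?_
    intro y hy
    dsimp only
    have hy0 : (0:ℝ) < y := hy
    rw [← ENNReal.ofReal_mul (by positivity)]
    congr 1
    rw [Real.mul_rpow (by norm_num) hy0.le]
    have h4 : ((2:ℝ)*y)^2 + 4 = 4*(y^2+1) := by ring
    rw [h4]
    field_simp
  rw [hleft, J1 hα hα'] at hscale
  have hscale2 : ENNReal.ofReal (2 ^ (-α) / 4) *
        ENNReal.ofReal (Real.Gamma ((1-α)/2) * Real.Gamma ((1+α)/2) / 2)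
      = ENNReal.ofReal 2⁻¹ * ∫⁻ x in Ioi (0:ℝ), ENNReal.ofReal (x ^ (-α) / (x^2+4)) := hscale
  have hJ4 : ∫⁻ x in Ioi (0:ℝ), ENNReal.ofReal (x ^ (-α) / (x^2+4))
      = ENNReal.ofReal 2 * (ENNReal.ofReal (2 ^ (-α) / 4) *
          ENNReal.ofReal (Real.Gamma ((1-α)/2) * Real.Gamma ((1+α)/2) / 2)) := by
    rw [hscale2, ← mul_assoc, ← ENNReal.ofReal_mul (by norm_num)]
    norm_num
  rw [hJ4, ← ENNReal.ofReal_mul (by positivity), ← ENNReal.ofReal_mul (by norm_num),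
    ← ENNReal.ofReal_mul (by positivity)]
  congr 1
  have h2 : (0:ℝ) < 2 ^ (-α) := Real.rpow_pos_of_pos (by norm_num) _
  field_simp
  ring

lemma Cval {α : ℝ} (hα : -1 < α) (hα' : α < 1) :
    (if α = 0 then Real.pi / 2 else Real.Gamma α * Real.sin (Real.pi * α / 2) / (1 - α))
      = Real.Gamma ((1-α)/2) * Real.Gamma ((1+α)/2) / (2 * Real.Gamma (2-α)) := by
  have hrefl : Real.Gamma ((1-α)/2) * Real.Gamma ((1+α)/2) = π / Real.cos (π * α / 2) := by
    have h := Real.Gamma_mul_Gamma_one_sub ((1+α)/2)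
    rw [show (1:ℝ) - (1+α)/2 = (1-α)/2 by ring] at h
    rw [show π * ((1+α)/2) = π * α / 2 + π / 2 by ring, Real.sin_add_pi_div_two] at h
    rw [mul_comm] at h
    exact h
  have hcos : (0:ℝ) < Real.cos (π * α / 2) := by
    apply Real.cos_pos_of_mem_Ioo
    constructor
    · have := Real.pi_pos; nlinarith
    · have := Real.pi_pos; nlinarith
  by_cases h0 : α = 0
  · subst h0
    simp only [if_pos rfl]
    norm_num [Real.Gamma_two]
    rw [Real.Gamma_one_half_eq, Real.mul_self_sqrt Real.pi_pos.le]
  · rw [if_neg h0, hrefl]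
    have h1α : (1:ℝ) - α ≠ 0 := by intro h; linarith [hα']
    have hΓ1 : (0:ℝ) < Real.Gamma (1-α) := Real.Gamma_pos_of_pos (by linarith)
    have hΓ2 : Real.Gamma (2-α) = (1-α) * Real.Gamma (1-α) := by
      rw [show (2:ℝ)-α = (1-α)+1 by ring, Real.Gamma_add_one h1α]
    have hreflect : Real.Gamma α * Real.Gamma (1-α) = π / Real.sin (π * α) :=
      Real.Gamma_mul_Gamma_one_sub α
    have hsin2 : Real.sin (π * α) = 2 * Real.sin (π * α / 2) * Real.cos (π * α / 2) := by
      rw [show π * α = 2 * (π * α / 2) by ring, Real.sin_two_mul]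
      ring
    have hsinhalf : Real.sin (π * α / 2) ≠ 0 := by
      rcases lt_or_gt_of_ne h0 with h | h
      · have : Real.sin (π * α / 2) < 0 := by
          rw [show π * α / 2 = -(π * (-α) / 2) by ring, Real.sin_neg, neg_lt_zero]
          apply Real.sin_pos_of_pos_of_lt_pi
          · have := Real.pi_pos; nlinarith
          · have := Real.pi_pos; nlinarith
        linarith
      · have : (0:ℝ) < Real.sin (π * α / 2) := by
          apply Real.sin_pos_of_pos_of_lt_pi
          · have := Real.pi_pos; nlinarith
          · have := Real.pi_pos; nlinarith
        linarith
    have hsinπα : Real.sin (π * α) ≠ 0 := by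
      rw [hsin2]
      have := hcos.ne'
      positivity
    have hΓα : Real.Gamma α = π / (Real.sin (π * α) * Real.Gamma (1-α)) := by
      field_simp at hreflect ⊢
      linarith [hreflect]
    rw [hΓα, hΓ2, hsin2]
    field_simp

/-- Lemma 3.1 of Balan–Jolis–Quer (wave case): the integral
`A_T(α) = ∫₀^T ∫_ℝ sin²(t|ξ|)/ξ² · |ξ|^α dξ dt` is finite iff `α ∈ (-1,1)`,
in which case it equals `2^{1-α} C_α T^{2-α}/(2-α)`. -/
theorem wave_spectral_integral (T : ℝ) (hT : 0 < T) (α : ℝ) :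
    ((∫⁻ t in Set.Ioc (0 : ℝ) T, ∫⁻ ξ : ℝ,
        ENNReal.ofReal ((Real.sin (t * |ξ|)) ^ 2 / ξ ^ 2 * |ξ| ^ α)) < ⊤
      ↔ α ∈ Set.Ioo (-1 : ℝ) 1) ∧
    (α ∈ Set.Ioo (-1 : ℝ) 1 →
      (∫⁻ t in Set.Ioc (0 : ℝ) T, ∫⁻ ξ : ℝ,
        ENNReal.ofReal ((Real.sin (t * |ξ|)) ^ 2 / ξ ^ 2 * |ξ| ^ α))
        = ENNReal.ofReal ((2 : ℝ) ^ (1 - α) *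
            (if α = 0 then Real.pi / 2
              else Real.Gamma α * Real.sin (Real.pi * α / 2) / (1 - α)) *
            T ^ (2 - α) / (2 - α))) := by
  have hM := master T α
  have hval : α ∈ Set.Ioo (-1:ℝ) 1 →
      (∫⁻ t in Set.Ioc (0 : ℝ) T, ∫⁻ ξ : ℝ,
        ENNReal.ofReal ((Real.sin (t * |ξ|)) ^ 2 / ξ ^ 2 * |ξ| ^ α))
      = ENNReal.ofReal ((2 : ℝ) ^ (1 - α) *
            (if α = 0 then Real.pi / 2
              else Real.Gamma α * Real.sin (Real.pi * α / 2) / (1 - α)) *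
            T ^ (2 - α) / (2 - α)) := by
    intro hmem
    have h2α : (0:ℝ) < 2 - α := by linarith [hmem.2]
    have hTα : (0:ℝ) < T ^ (2-α) := Real.rpow_pos_of_pos hT _
    have hΓ : (0:ℝ) < Real.Gamma (2-α) := Real.Gamma_pos_of_pos h2α
    have hΓa : (0:ℝ) < Real.Gamma ((1-α)/2) := Real.Gamma_pos_of_pos (by linarith [hmem.2])
    have hΓb : (0:ℝ) < Real.Gamma ((1+α)/2) := Real.Gamma_pos_of_pos (by linarith [hmem.1])
    have h2neg : (0:ℝ) < (2:ℝ) ^ (-α) := Real.rpow_pos_of_pos (by norm_num) _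
    rw [hM, tau_eq hT (by linarith [hmem.2]), I_value hmem.1 hmem.2,
      ← ENNReal.ofReal_mul (by positivity), Cval hmem.1 hmem.2]
    congr 1
    rw [show (1:ℝ) - α = 1 + -α by ring, Real.rpow_add (by norm_num : (0:ℝ) < 2),
      Real.rpow_one]
    field_simp
  refine ⟨⟨fun hfin => ?_, fun hmem => ?_⟩, hval⟩
  · by_contra hout
    have hItop : Iα α = ⊤ := by
      rcases not_and_or.1 (fun h => hout (Set.mem_Ioo.2 ⟨lt_of_not_ge h.1, lt_of_not_ge h.2⟩)) with h | h
      · exact I_top_neg (by linarith [le_of_not_gt (fun hc : -1 < α => h (not_le.2 hc).elim)])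
      · exact I_top_pos (by linarith [le_of_not_gt (fun hc : α < 1 => h (not_le.2 hc).elim)])
    rw [hM, hItop, ENNReal.mul_top (tau_pos hT)] at hfin
    exact absurd hfin (lt_irrefl ⊤)
  · rw [hval hmem]
    exact ENNReal.ofReal_lt_top
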